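/- Let I ⊆ ℝ be a nonempty open interval and let γ : ℝ → ℝ² be twice differentiable on I with ‖γ'(s)‖ = 1 for every s ∈ I. Define the unit normal n(s) = (−γ'₂(s), γ'₁(s)) and the signed curvature κ(s) = ⟨γ''(s), n(s)⟩. Let u ∈ ℝ² and λ ∈ ℝ satisfy ⟨n(s), u⟩ + λ = 0 for every s ∈ I. Then either κ(s) = 0 for every s ∈ I, or u = 0 and λ = 0. -/

import Mathlib

open scoped InnerProductSpace

/-- If a unit-speed planar curve `γ` on an open interval satisfies
`⟪n(s), u⟫ + λ = 0` where `n` is its unit normal, then either its signed curvature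
vanishes identically, or `u = 0` and `λ = 0`. -/
theorem cylindrical_translator_core (a b : ℝ) (hab : a < b)
    (γ γ' γ'' : ℝ → EuclideanSpace ℝ (Fin 2))
    (hγ : ∀ s ∈ Set.Ioo a b, HasDerivAt γ (γ' s) s)
    (hγ' : ∀ s ∈ Set.Ioo a b, HasDerivAt γ' (γ'' s) s)
    (hunit : ∀ s ∈ Set.Ioo a b, ‖γ' s‖ = 1)
    (n : ℝ → EuclideanSpace ℝ (Fin 2))
    (hn : ∀ s, n s = (WithLp.equiv 2 (Fin 2 → ℝ)).symm ![-(γ' s 1), γ' s 0])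
    (κ : ℝ → ℝ) (hκ : ∀ s, κ s = ⟪γ'' s, n s⟫_ℝ)
    (u : EuclideanSpace ℝ (Fin 2)) (lam : ℝ)
    (heq : ∀ s ∈ Set.Ioo a b, ⟪n s, u⟫_ℝ + lam = 0) :
    (∀ s ∈ Set.Ioo a b, κ s = 0) ∨ (u = 0 ∧ lam = 0) := by
  -- notation for components
  set A : ℝ → ℝ := fun s => γ' s 0 with hA
  set B : ℝ → ℝ := fun s => γ' s 1 with hB
  set X : ℝ → ℝ := fun s => γ'' s 0 with hX
  set Y : ℝ → ℝ := fun s => γ'' s 1 with hY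
  have hinner : ∀ v w : EuclideanSpace ℝ (Fin 2), ⟪v,w⟫_ℝ = v 0 * w 0 + v 1 * w 1 := by
    intro v w
    simp [PiLp.inner_apply, Fin.sum_univ_two, RCLike.inner_apply, mul_comm]
  have hn0 : ∀ s, n s 0 = -(B s) := by intro s; rw [hn]; simp [hB]
  have hn1 : ∀ s, n s 1 = A s := by intro s; rw [hn]; simp [hA]
  -- κ in components
  have hκc : ∀ s, κ s = -(X s) * B s + Y s * A s := by
    intro s; rw [hκ, hinner, hn0, hn1]; ring
  -- g ≡ -lam in components
  have hg : ∀ s ∈ Set.Ioo a b, -(B s) * u 0 + A s * u 1 = -lam := by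
    intro s hs
    have := heq s hs
    rw [hinner, hn0, hn1] at this
    linarith
  -- unit speed: A² + B² = 1
  have hunit2 : ∀ s ∈ Set.Ioo a b, A s ^ 2 + B s ^ 2 = 1 := by
    intro s hs
    have h1 : ⟪γ' s, γ' s⟫_ℝ = 1 := by
      rw [real_inner_self_eq_norm_sq, hunit s hs]; norm_num
    rw [hinner] at h1
    nlinarith [h1]
  -- component derivatives
  have hdA : ∀ s ∈ Set.Ioo a b, HasDerivAt A (X s) s := by
    intro s hs
    exact (EuclideanSpace.proj (0 : Fin 2)).hasFDerivAt.comp_hasDerivAt s (hγ' s hs)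
  have hdB : ∀ s ∈ Set.Ioo a b, HasDerivAt B (Y s) s := by
    intro s hs
    exact (EuclideanSpace.proj (1 : Fin 2)).hasFDerivAt.comp_hasDerivAt s (hγ' s hs)
  -- derivative of an Ioo-constant function is zero
  have hconstderiv : ∀ (f : ℝ → ℝ) (c d : ℝ) (s : ℝ), s ∈ Set.Ioo a b →
      (∀ t ∈ Set.Ioo a b, f t = c) → HasDerivAt f d s → d = 0 := by
    intro f c d s hs hfc hfd
    have hev : f =ᶠ[nhds s] fun _ => c :=
      Filter.eventually_of_mem (Ioo_mem_nhds hs.1 hs.2) hfc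
    have : HasDerivAt (fun _ : ℝ => c) d s := (Filter.EventuallyEq.hasDerivAt_iff hev).mp hfd
    exact this.unique (hasDerivAt_const s c)
  -- A X + B Y = 0 on I
  have horth : ∀ s ∈ Set.Ioo a b, A s * X s + B s * Y s = 0 := by
    intro s hs
    have hd : HasDerivAt (fun t => A t ^ 2 + B t ^ 2)
        (2 * A s * X s + 2 * B s * Y s) s := by
      have := (((hdA s hs).pow 2).add ((hdB s hs).pow 2))
      refine this.congr_deriv ?_
      norm_num
    have := hconstderiv _ 1 _ s hs hunit2 hd
    linarith
  -- derivative of g constant: -Y u0 + X u1 = 0 on I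
  have hgd : ∀ s ∈ Set.Ioo a b, -(Y s) * u 0 + X s * u 1 = 0 := by
    intro s hs
    have hd : HasDerivAt (fun t => -(B t) * u 0 + A t * u 1)
        (-(Y s) * u 0 + X s * u 1) s :=
      (((hdB s hs).neg).mul_const (u 0)).add ((hdA s hs).mul_const (u 1))
    exact hconstderiv _ (-lam) _ s hs hg hd
  -- γ'' = κ n componentwise: X = κ(-B), Y = κ A
  have hXY : ∀ s ∈ Set.Ioo a b, X s = κ s * (-(B s)) ∧ Y s = κ s * A s := by
    intro s hs
    have h1 := horth s hs
    have h2 := hunit2 s hs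
    constructor
    · rw [hκc]; linear_combination A s * h1 - X s * h2
    · rw [hκc]; linear_combination B s * h1 - Y s * h2
  by_cases hzero : ∀ s ∈ Set.Ioo a b, κ s = 0
  · exact Or.inl hzero
  right
  push_neg at hzero
  obtain ⟨s₀, hs₀, hκ₀⟩ := hzero
  -- f s = A s * u0 + B s * u1; κ f = 0 on I
  have hκf : ∀ s ∈ Set.Ioo a b, κ s * (A s * u 0 + B s * u 1) = 0 := by
    intro s hs
    obtain ⟨h1, h2⟩ := hXY s hs
    have := hgd s hs
    rw [h1, h2] at this
    nlinarith [this]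
  have hf₀ : A s₀ * u 0 + B s₀ * u 1 = 0 := by
    have := hκf s₀ hs₀
    rcases mul_eq_zero.mp this with h | h
    · exact absurd h hκ₀
    · exact h
  -- f² + lam² = ‖u‖² is constant; since f s₀ = 0, f ≡ 0
  have hfsq : ∀ s ∈ Set.Ioo a b, (A s * u 0 + B s * u 1) ^ 2 = u 0 ^ 2 + u 1 ^ 2 - lam ^ 2 := by
    intro s hs
    have h1 := hg s hs
    have h2 := hunit2 s hs
    linear_combination (lam - (-(B s) * u 0 + A s * u 1)) * h1 + (u 0 ^ 2 + u 1 ^ 2) * h2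
  have hfzero : ∀ s ∈ Set.Ioo a b, A s * u 0 + B s * u 1 = 0 := by
    intro s hs
    have h1 := hfsq s hs
    have h2 := hfsq s₀ hs₀
    rw [hf₀] at h2
    have h3 : (A s * u 0 + B s * u 1) ^ 2 = 0 := by rw [h1]; rw [← h2]; ring
    exact pow_eq_zero_iff two_ne_zero |>.mp h3
  -- derivative of f at s₀ is 0, but equals -κ(s₀) lam
  have hfd : HasDerivAt (fun t => A t * u 0 + B t * u 1)
      (X s₀ * u 0 + Y s₀ * u 1) s₀ :=
    ((hdA s₀ hs₀).mul_const (u 0)).add ((hdB s₀ hs₀).mul_const (u 1))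
  have hder0 : X s₀ * u 0 + Y s₀ * u 1 = 0 :=
    hconstderiv _ 0 _ s₀ hs₀ hfzero hfd
  obtain ⟨hX₀, hY₀⟩ := hXY s₀ hs₀
  have hlam : lam = 0 := by
    rw [hX₀, hY₀] at hder0
    have hg₀ := hg s₀ hs₀
    have : κ s₀ * (-(B s₀) * u 0 + A s₀ * u 1) = 0 := by nlinarith [hder0]
    rcases mul_eq_zero.mp this with h | h
    · exact absurd h hκ₀
    · rw [h] at hg₀; linarith
  have hu0 : u 0 = 0 := by
    have h1 := hg s₀ hs₀
    rw [hlam] at h1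
    have h2 := hunit2 s₀ hs₀
    linear_combination A s₀ * hf₀ - B s₀ * h1 - u 0 * h2
  have hu1 : u 1 = 0 := by
    have h1 := hg s₀ hs₀
    rw [hlam] at h1
    have h2 := hunit2 s₀ hs₀
    linear_combination B s₀ * hf₀ + A s₀ * h1 - u 1 * h2
  refine ⟨?_, hlam⟩
  ext i
  fin_cases i
  · exact hu0
  · exact hu1
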